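/- Let Γ be a countable group and let μ be an invariant random subgroup of Γ, i.e. a Borel probability measure on Sub(Γ) invariant under the conjugation action of Γ. Then μ-almost every subgroup of Γ is a boomerang subgroup, i.e. μ(Boom(Γ)) = 1. -/

import Mathlib

/-- The conjugation action of `γ` on subgroups: `Δ ↦ γ Δ γ⁻¹`. -/
def conjSubgroup {Γ : Type*} [Group Γ] (γ : Γ) (Δ : Subgroup Γ) : Subgroup Γ :=
  Subgroup.map (MulAut.conj γ).toMonoidHom Δ

/-- The Chabauty topology on `Subgroup Γ`: induced from the product of discrete
topologies on `Γ → Prop` via the membership indicator. -/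
def chabautyTopology (Γ : Type*) [Group Γ] : TopologicalSpace (Subgroup Γ) :=
  TopologicalSpace.induced (fun (Δ : Subgroup Γ) (g : Γ) => g ∈ Δ)
    (@Pi.topologicalSpace Γ (fun _ => Prop) (fun _ => ⊥))

/-- `γ` is a recurrent direction for `Δ`: every Chabauty-open neighbourhood `O` of `Δ`
contains `γ^n Δ γ^{-n}` for some `n ≥ 1`. -/
def IsRecurrentDirection {Γ : Type*} [Group Γ] (γ : Γ) (Δ : Subgroup Γ) : Prop :=
  ∀ O : Set (Subgroup Γ), (chabautyTopology Γ).IsOpen O → Δ ∈ O →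
    ∃ n : ℕ, 1 ≤ n ∧ conjSubgroup (γ ^ n) Δ ∈ O

/-- `Δ` is a boomerang subgroup if every `γ` is a recurrent direction for it. -/
def IsBoomerang {Γ : Type*} [Group Γ] (Δ : Subgroup Γ) : Prop :=
  ∀ γ : Γ, IsRecurrentDirection γ Δ

/-- The Borel σ-algebra of the Chabauty topology. -/
def chabautyBorel (Γ : Type*) [Group Γ] : MeasurableSpace (Subgroup Γ) :=
  @borel (Subgroup Γ) (chabautyTopology Γ)

lemma mem_conjSubgroup {Γ : Type*} [Group Γ] (γ g : Γ) (Δ : Subgroup Γ) :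
    g ∈ conjSubgroup γ Δ ↔ γ⁻¹ * g * γ ∈ Δ := by
  simp only [conjSubgroup, Subgroup.mem_map, MulEquiv.coe_toMonoidHom, MulAut.conj_apply]
  constructor
  · rintro ⟨x, hx, rfl⟩
    have h : γ⁻¹ * (γ * x * γ⁻¹) * γ = x := by group
    rwa [h]
  · intro h
    exact ⟨γ⁻¹ * g * γ, h, by group⟩

lemma conjSubgroup_conjSubgroup {Γ : Type*} [Group Γ] (γ δ : Γ) (Δ : Subgroup Γ) :
    conjSubgroup γ (conjSubgroup δ Δ) = conjSubgroup (γ * δ) Δ := by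
  ext g
  simp only [mem_conjSubgroup, mul_inv_rev]
  have h : δ⁻¹ * (γ⁻¹ * g * γ) * δ = δ⁻¹ * γ⁻¹ * g * (γ * δ) := by group
  rw [h]

lemma conjSubgroup_one {Γ : Type*} [Group Γ] (Δ : Subgroup Γ) :
    conjSubgroup (1 : Γ) Δ = Δ := by
  ext g; simp [mem_conjSubgroup]

lemma iterate_conjSubgroup {Γ : Type*} [Group Γ] (γ : Γ) (n : ℕ) (Δ : Subgroup Γ) :
    (conjSubgroup γ)^[n] Δ = conjSubgroup (γ ^ n) Δ := by
  induction n with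
  | zero => simp [conjSubgroup_one]
  | succ n ih =>
      rw [Function.iterate_succ', Function.comp_apply, ih, conjSubgroup_conjSubgroup,
        ← pow_succ']

open Topology

/-- evaluation maps on the product of `⊥`-topologies are continuous -/
lemma contEval {ι : Type*} (i : ι) :
    Continuous[@Pi.topologicalSpace ι (fun _ => Prop) (fun _ => ⊥), ⊥]
      (fun y : ι → Prop => y i) :=
  @continuous_apply ι (fun _ => Prop) (fun _ => ⊥) i

lemma isOpen_eval_pre {ι : Type*} (i : ι) (s : Set Prop) :
    IsOpen[@Pi.topologicalSpace ι (fun _ => Prop) (fun _ => ⊥)]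
      ((fun y : ι → Prop => y i) ⁻¹' s) :=
  @Continuous.isOpen_preimage (ι → Prop) Prop
    (@Pi.topologicalSpace ι (fun _ => Prop) (fun _ => ⊥)) ⊥
    (fun y : ι → Prop => y i) (contEval i) s
    (@isOpen_discrete Prop ⊥ (discreteTopology_bot Prop) s)

open MeasureTheory Filter

theorem irs_almost_surely_boomerang {Γ : Type*} [Group Γ] [Countable Γ]
    (μ : @MeasureTheory.Measure (Subgroup Γ) (chabautyBorel Γ))
    (hprob : @MeasureTheory.IsProbabilityMeasure (Subgroup Γ) (chabautyBorel Γ) μ)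
    (hinv : ∀ γ : Γ, ∀ s : Set (Subgroup Γ),
      @MeasurableSet (Subgroup Γ) (chabautyBorel Γ) s →
        μ ((conjSubgroup γ) ⁻¹' s) = μ s) :
    μ {Δ : Subgroup Γ | IsBoomerang Δ} = 1 := by
  letI : TopologicalSpace (Subgroup Γ) := chabautyTopology Γ
  letI : MeasurableSpace (Subgroup Γ) := chabautyBorel Γ
  haveI : BorelSpace (Subgroup Γ) := ⟨rfl⟩
  haveI := hprob
  -- membership sets are open
  have hopen_mem : ∀ g : Γ, IsOpen {Δ : Subgroup Γ | g ∈ Δ} := by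
    intro g
    have h1 : {Δ : Subgroup Γ | g ∈ Δ} =
        (fun (Δ : Subgroup Γ) (g : Γ) => g ∈ Δ) ⁻¹'
          ((fun y : Γ → Prop => y g) ⁻¹' {p | p}) := rfl
    rw [h1]
    exact @isOpen_induced _ _ (@Pi.topologicalSpace Γ (fun _ => Prop) (fun _ => ⊥))
      (fun (Δ : Subgroup Γ) (g : Γ) => g ∈ Δ) _ (isOpen_eval_pre g {p | p})
  have hopen_nmem : ∀ g : Γ, IsOpen {Δ : Subgroup Γ | g ∈ Δ}ᶜ := by
    intro g
    have h1 : {Δ : Subgroup Γ | g ∈ Δ}ᶜ =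
        (fun (Δ : Subgroup Γ) (g : Γ) => g ∈ Δ) ⁻¹'
          ((fun y : Γ → Prop => y g) ⁻¹' {p | ¬ p}) := rfl
    rw [h1]
    exact @isOpen_induced _ _ (@Pi.topologicalSpace Γ (fun _ => Prop) (fun _ => ⊥))
      (fun (Δ : Subgroup Γ) (g : Γ) => g ∈ Δ) _ (isOpen_eval_pre g {p | ¬ p})
  -- basic open sets
  set B : Finset Γ → Finset Γ → Set (Subgroup Γ) := fun F₁ F₂ =>
    {Δ | (∀ g ∈ F₁, g ∈ Δ) ∧ (∀ g ∈ F₂, g ∉ Δ)} with hB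
  have hBopen : ∀ F₁ F₂, IsOpen (B F₁ F₂) := by
    intro F₁ F₂
    have : B F₁ F₂ = (⋂ g ∈ F₁, {Δ : Subgroup Γ | g ∈ Δ}) ∩
        ⋂ g ∈ F₂, {Δ : Subgroup Γ | g ∈ Δ}ᶜ := by
      ext Δ; simp [hB]
    rw [this]
    exact (isOpen_biInter_finset fun g _ => hopen_mem g).inter
      (isOpen_biInter_finset fun g _ => hopen_nmem g)
  -- every open nbhd contains a basic nbhd
  have hbasis : ∀ (O : Set (Subgroup Γ)), IsOpen O → ∀ Δ ∈ O,
      ∃ F₁ F₂ : Finset Γ, Δ ∈ B F₁ F₂ ∧ B F₁ F₂ ⊆ O := by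
    intro O hO Δ hΔ
    obtain ⟨U, hU, rfl⟩ := (@isOpen_induced_iff (Subgroup Γ) (Γ → Prop)
      (@Pi.topologicalSpace Γ (fun _ => Prop) (fun _ => ⊥)) O
      (fun (Δ : Subgroup Γ) (g : Γ) => g ∈ Δ)).mp hO
    obtain ⟨I, u, hu, hsub⟩ := (@isOpen_pi_iff Γ (fun _ => Prop) (fun _ => ⊥) U).mp hU _ hΔ
    classical
    refine ⟨I.filter (fun g => g ∈ Δ), I.filter (fun g => g ∉ Δ), ?_, ?_⟩
    · constructor <;> intro g hg <;> simpa using (Finset.mem_filter.mp hg).2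
    · intro Δ' hΔ'
      apply hsub
      intro g hg
      have hagree : (g ∈ Δ') = (g ∈ Δ) := by
        by_cases h : g ∈ Δ
        · have := hΔ'.1 g (Finset.mem_filter.mpr ⟨hg, h⟩)
          simp [this, h]
        · have := hΔ'.2 g (Finset.mem_filter.mpr ⟨hg, h⟩)
          simp [this, h]
      show (g ∈ Δ') ∈ u g
      rw [hagree]
      exact (hu g hg).2
  -- conjugation is continuous, hence measurable and measure preserving
  have hcont : ∀ γ : Γ, Continuous (conjSubgroup γ) := by
    intro γ
    have h1 : (fun (Δ : Subgroup Γ) (g : Γ) => g ∈ Δ) ∘ conjSubgroup γ =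
        fun (Δ : Subgroup Γ) (g : Γ) => (γ⁻¹ * g * γ) ∈ Δ := by
      funext Δ
      funext g
      exact propext (mem_conjSubgroup γ g Δ)
    have hcomp : Continuous[chabautyTopology Γ,
        @Pi.topologicalSpace Γ (fun _ => Prop) (fun _ => ⊥)]
        ((fun (Δ : Subgroup Γ) (g : Γ) => g ∈ Δ) ∘ conjSubgroup γ) := by
      rw [h1]
      exact @continuous_pi (Subgroup Γ) Γ (fun _ => Prop) (chabautyTopology Γ) (fun _ => ⊥)
        _ (fun g =>
          @Continuous.comp (Subgroup Γ) (Γ → Prop) Prop (chabautyTopology Γ)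
            (@Pi.topologicalSpace Γ (fun _ => Prop) (fun _ => ⊥)) ⊥
            (fun (Δ : Subgroup Γ) (g : Γ) => g ∈ Δ) (fun y : Γ → Prop => y (γ⁻¹ * g * γ))
            (contEval (γ⁻¹ * g * γ))
            (@continuous_induced_dom (Subgroup Γ) (Γ → Prop)
              (fun (Δ : Subgroup Γ) (g : Γ) => g ∈ Δ)
              (@Pi.topologicalSpace Γ (fun _ => Prop) (fun _ => ⊥))))
    exact continuous_induced_rng.mpr hcomp
  have hmp : ∀ γ : Γ, MeasurePreserving (conjSubgroup γ) μ μ := by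
    intro γ
    refine ⟨(hcont γ).measurable, Measure.ext fun s hs => ?_⟩
    rw [Measure.map_apply (hcont γ).measurable hs, hinv γ s hs]
  -- Poincaré recurrence for each γ and each basic set
  have key : ∀ γ : Γ, ∀ F₁ F₂ : Finset Γ, ∀ᵐ Δ ∂μ, Δ ∈ B F₁ F₂ →
      ∃ n : ℕ, 1 ≤ n ∧ conjSubgroup (γ ^ n) Δ ∈ B F₁ F₂ := by
    intro γ F₁ F₂
    have hcons := (hmp γ).conservative
    have := hcons.ae_mem_imp_frequently_image_mem
      (s := B F₁ F₂) (hBopen F₁ F₂).measurableSet.nullMeasurableSet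
    filter_upwards [this] with Δ h hΔ
    obtain ⟨n, hn, hmem⟩ := (frequently_atTop.mp (h hΔ)) 1
    exact ⟨n, hn, by rwa [iterate_conjSubgroup] at hmem⟩
  have keyall : ∀ᵐ Δ ∂μ, ∀ γ : Γ, ∀ F₁ F₂ : Finset Γ, Δ ∈ B F₁ F₂ →
      ∃ n : ℕ, 1 ≤ n ∧ conjSubgroup (γ ^ n) Δ ∈ B F₁ F₂ := by
    rw [ae_all_iff]
    intro γ
    rw [ae_all_iff]
    intro F₁
    rw [ae_all_iff]
    intro F₂
    exact key γ F₁ F₂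
  have hae : ∀ᵐ Δ ∂μ, IsBoomerang Δ := by
    filter_upwards [keyall] with Δ h
    intro γ O hO hΔO
    obtain ⟨F₁, F₂, hmem, hsub⟩ := hbasis O hO Δ hΔO
    obtain ⟨n, hn, hconj⟩ := h γ F₁ F₂ hmem
    exact ⟨n, hn, hsub hconj⟩
  have h0 : μ {Δ : Subgroup Γ | IsBoomerang Δ}ᶜ = 0 := by
    simpa [ae_iff, Set.compl_setOf] using hae
  refine le_antisymm prob_le_one ?_
  calc (1 : ENNReal) = μ Set.univ := (measure_univ).symm
    _ ≤ μ {Δ : Subgroup Γ | IsBoomerang Δ} + μ {Δ : Subgroup Γ | IsBoomerang Δ}ᶜ := by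
        rw [← Set.union_compl_self {Δ : Subgroup Γ | IsBoomerang Δ}]
        exact measure_union_le _ _
    _ = μ {Δ : Subgroup Γ | IsBoomerang Δ} := by rw [h0, add_zero]
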